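/- Let (X,d) be a complete metric space and let F be a multivalued mapping from X to X with closed values such that: (i) for every sequence (x_n) converging to a point x ∈ X with lim_n d(F(x_n),x_n) = 0 one has d(F(x),x) = 0; and (ii) there exist α, ε ≥ 0 with α + ε < 1 such that for each x ∈ X there exists y ∈ F(x) with d(F(y),y) ≤ α d(y,x) and α d(y,x) ≤ (α+ε) d(F(x),x). Then F has a fixed point. -/
import Mathlib


open Metric Filter

/-- **Theorem 1.4.** Let `(X,d)` be a complete metric space and `F` a multivalued mapping
from `X` to `X` with nonempty closed values such that:
(i) for every sequence `xₙ → x` with `d(F(xₙ),xₙ) → 0` one has `d(F(x),x) = 0`; and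
(ii) for some `α, ε ≥ 0` with `α + ε < 1`, for each `x` there is `y ∈ F x` with
`d(F(y),y) ≤ α·d(y,x)` and `α·d(y,x) ≤ (α+ε)·d(F(x),x)`. Then `F` has a fixed point. -/
theorem fixed_point_of_generalized_contraction
    {X : Type*} [MetricSpace X] [CompleteSpace X] [Nonempty X]
    (F : X → Set X) (hFne : ∀ x, (F x).Nonempty) (hFcl : ∀ x, IsClosed (F x))
    (hreg : ∀ (u : ℕ → X) (x : X), Tendsto u atTop (nhds x) →
      Tendsto (fun n => infDist (u n) (F (u n))) atTop (nhds 0) →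
      infDist x (F x) = 0)
    (α ε : ℝ) (hα : 0 ≤ α) (hε : 0 ≤ ε) (hαε : α + ε < 1)
    (hF : ∀ x : X, ∃ y ∈ F x,
      infDist y (F y) ≤ α * dist y x ∧
      α * dist y x ≤ (α + ε) * infDist x (F x)) :
    ∃ x : X, x ∈ F x := by
  have mem_of_infDist_zero : ∀ x : X, infDist x (F x) = 0 → x ∈ F x := by
    intro x hx
    have := (mem_closure_iff_infDist_zero (hFne x)).2 hx
    rwa [(hFcl x).closure_eq] at this
  rcases eq_or_lt_of_le hα with hα0 | hαpos
  · -- α = 0 : immediate fixed point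
    obtain ⟨y, hy, h1, _⟩ := hF (Classical.arbitrary X)
    refine ⟨y, mem_of_infDist_zero y ?_⟩
    have h0 : infDist y (F y) ≤ 0 := by
      simpa [← hα0] using h1
    exact le_antisymm h0 (infDist_nonneg)
  · -- α > 0 : build iterative sequence
    set r := α + ε with hr
    have hr0 : 0 ≤ r := by positivity
    -- the sequence
    let u : ℕ → X := fun n => Nat.rec (Classical.arbitrary X)
      (fun _ x => (hF x).choose) n
    have hu : ∀ n, u (n + 1) ∈ F (u n) ∧
        infDist (u (n + 1)) (F (u (n + 1))) ≤ α * dist (u (n + 1)) (u n) ∧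
        α * dist (u (n + 1)) (u n) ≤ r * infDist (u n) (F (u n)) := by
      intro n
      obtain ⟨hy, h1, h2⟩ := (hF (u n)).choose_spec
      exact ⟨hy, h1, h2⟩
    set d : ℕ → ℝ := fun n => infDist (u n) (F (u n)) with hd
    have hdnn : ∀ n, 0 ≤ d n := fun n => infDist_nonneg
    have hstep : ∀ n, d (n + 1) ≤ r * d n := fun n =>
      le_trans (hu n).2.1 (hu n).2.2
    have hgeo : ∀ n, d n ≤ r ^ n * d 0 := by
      intro n
      induction n with
      | zero => simp
      | succ n ih =>
        calc d (n + 1) ≤ r * d n := hstep n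
          _ ≤ r * (r ^ n * d 0) := by
              exact mul_le_mul_of_nonneg_left ih hr0
          _ = r ^ (n + 1) * d 0 := by ring
    have hdist : ∀ n, dist (u n) (u (n + 1)) ≤ (r / α * d 0) * r ^ n := by
      intro n
      have h2 := (hu n).2.2
      have : α * dist (u (n + 1)) (u n) ≤ r * (r ^ n * d 0) :=
        le_trans h2 (mul_le_mul_of_nonneg_left (hgeo n) hr0)
      have := (le_div_iff₀' hαpos).2 this
      calc dist (u n) (u (n + 1)) = dist (u (n + 1)) (u n) := dist_comm _ _
        _ ≤ r * (r ^ n * d 0) / α := this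
        _ = (r / α * d 0) * r ^ n := by ring
    have hcau : CauchySeq u := cauchySeq_of_le_geometric r _ hαε hdist
    obtain ⟨x, hx⟩ := cauchySeq_tendsto_of_complete hcau
    have hd0 : Tendsto d atTop (nhds 0) := by
      have hg : Tendsto (fun n => r ^ n * d 0) atTop (nhds 0) := by
        have := tendsto_pow_atTop_nhds_zero_of_lt_one hr0 hαε
        simpa using this.mul_const (d 0)
      exact squeeze_zero hdnn hgeo hg
    exact ⟨x, mem_of_infDist_zero x (hreg u x hx hd0)⟩
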